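/- Euler's quadratic convolution recurrence for even-indexed Bernoulli numbers: for every natural number n ≥ 2, (2n+1) · B_{2n} = − ∑_{k=1}^{n−1} C(2n, 2k) · B_{2k} · B_{2n−2k}. -/

import Mathlib

open PowerSeries Finset Nat

noncomputable def Bps : ℚ⟦X⟧ := bernoulliPowerSeries ℚ

lemma coeff_Bps (n : ℕ) : coeff n Bps = bernoulli n / n ! := by
  simp [Bps, bernoulliPowerSeries, coeff_mk]

lemma derivExpQ : d⁄dX ℚ (exp ℚ) = exp ℚ := by
  ext n
  rw [PowerSeries.coeff_derivative, coeff_exp, coeff_exp]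
  simp only [Nat.factorial_succ, Algebra.algebraMap_self, RingHom.id_apply]
  push_cast
  rw [one_div, one_div, mul_inv, mul_comm]
  rw [← mul_assoc, mul_inv_cancel₀ (by positivity), one_mul]

lemma exp_sub_one_ne : (exp ℚ - 1) ≠ 0 := by
  intro h
  have := congrArg (coeff 1) h
  simp [coeff_exp] at this

lemma key_series : Bps * Bps = Bps - X * Bps - X * (d⁄dX ℚ Bps) := by
  have h1 : Bps * (exp ℚ - 1) = X := bernoulliPowerSeries_mul_exp_sub_one ℚ
  have h2 : (d⁄dX ℚ Bps) * (exp ℚ - 1) + Bps * exp ℚ = 1 := by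
    have h := congrArg (d⁄dX ℚ) h1
    rw [Derivation.leibniz, derivative_X, map_sub, derivExpQ, Derivation.map_one_eq_zero, sub_zero,
      smul_eq_mul, smul_eq_mul] at h
    linear_combination h
  have hne : (exp ℚ - 1) * (exp ℚ - 1) ≠ 0 := mul_ne_zero exp_sub_one_ne exp_sub_one_ne
  apply mul_right_cancel₀ hne
  linear_combination (2*(X:ℚ⟦X⟧) - (exp ℚ - 1) + X*(exp ℚ - 1) - X*(exp ℚ) + (Bps*(exp ℚ - 1) - X)) * h1 + (X*(exp ℚ - 1)) * h2

lemma conv_sum (m : ℕ) (hm : 1 ≤ m) :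
    ∑ k ∈ range (m + 1), (m.choose k : ℚ) * bernoulli k * bernoulli (m - k)
      = bernoulli m - m * bernoulli (m - 1) - m * bernoulli m := by
  obtain ⟨t, rfl⟩ : ∃ t, m = t + 1 := ⟨m - 1, by omega⟩
  have hc := congrArg (coeff (t + 1)) key_series
  rw [coeff_mul, Finset.Nat.sum_antidiagonal_eq_sum_range_succ_mk, map_sub, map_sub,
    coeff_succ_X_mul, coeff_succ_X_mul, coeff_derivative, coeff_Bps, coeff_Bps] at hc
  simp only [coeff_Bps] at hc
  have hterm : ∀ k ∈ range (t + 2), ((t + 1).choose k : ℚ) * bernoulli k * bernoulli (t + 1 - k)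
      = ((t + 1)! : ℚ) * (bernoulli k / k ! * (bernoulli (t + 1 - k) / (t + 1 - k)!)) := by
    intro k hk
    have hk' : k ≤ t + 1 := by simp only [mem_range] at hk; omega
    have h := Nat.choose_mul_factorial_mul_factorial hk'
    have h' : ((t + 1).choose k : ℚ) * k ! * (t + 1 - k)! = (t + 1)! := by exact_mod_cast congrArg Nat.cast h
    have hk0 : (k ! : ℚ) ≠ 0 := by exact_mod_cast Nat.factorial_ne_zero k
    have hk1 : (((t + 1 - k)!) : ℚ) ≠ 0 := by exact_mod_cast Nat.factorial_ne_zero _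
    field_simp
    linear_combination (bernoulli k * bernoulli (t + 1 - k)) * h'
  rw [Nat.succ_eq_add_one] at hc
  rw [Finset.sum_congr rfl hterm, ← Finset.mul_sum, hc]
  have h1 : ((t + 1)! : ℚ) = (t + 1) * t ! := by exact_mod_cast Nat.factorial_succ t
  have h2 : ((t + 1)! : ℚ) ≠ 0 := by exact_mod_cast Nat.factorial_ne_zero _
  have h3 : (t ! : ℚ) ≠ 0 := by exact_mod_cast Nat.factorial_ne_zero _
  simp only [Nat.add_sub_cancel]
  rw [h1]
  field_simp
  push_cast
  ring

lemma sum_range_even_odd (f : ℕ → ℚ) (n : ℕ) :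
    ∑ k ∈ range (2 * n + 1), f k
      = ∑ j ∈ range (n + 1), f (2 * j) + ∑ j ∈ range n, f (2 * j + 1) := by
  induction n with
  | zero => simp
  | succ n ih =>
    rw [show 2 * (n + 1) + 1 = (2 * n + 1) + 1 + 1 by ring, sum_range_succ, sum_range_succ, ih,
      sum_range_succ (fun j => f (2 * j)) (n + 1), sum_range_succ (fun j => f (2 * j + 1)) n]
    simp only [show 2 * (n + 1) = 2 * n + 1 + 1 by ring]
    ring

lemma bern_odd {k : ℕ} (h : Odd k) (h1 : 1 < k) : bernoulli k = 0 := by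
  rw [bernoulli_eq_bernoulli'_of_ne_one (by omega), bernoulli'_eq_zero_of_odd h h1]

/-- Euler's quadratic convolution recurrence for even-indexed Bernoulli numbers:
for `n ≥ 2`, `(2n+1) · B_{2n} = -∑_{k=1}^{n-1} C(2n, 2k) · B_{2k} · B_{2n-2k}`. -/
theorem euler_bernoulli_convolution (n : ℕ) (hn : 2 ≤ n) :
    (2 * (n : ℚ) + 1) * bernoulli (2 * n)
      = -∑ k ∈ Finset.Ico 1 n,
          (Nat.choose (2 * n) (2 * k) : ℚ) * bernoulli (2 * k) * bernoulli (2 * n - 2 * k) := by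
  have h := conv_sum (2 * n) (by omega)
  rw [sum_range_even_odd (fun k => ((2 * n).choose k : ℚ) * bernoulli k * bernoulli (2 * n - k)) n] at h
  have hodd : ∑ j ∈ range n, (fun k => ((2 * n).choose k : ℚ) * bernoulli k * bernoulli (2 * n - k)) (2 * j + 1) = 0 := by
    apply Finset.sum_eq_zero
    intro j hj
    simp only
    rcases Nat.eq_zero_or_pos j with hj0 | hj0
    · subst hj0
      have : bernoulli (2 * n - (2 * 0 + 1)) = 0 :=
        bern_odd ⟨n - 1, by omega⟩ (by omega)
      rw [this]; ring
    · have : bernoulli (2 * j + 1) = 0 := bern_odd ⟨j, by ring⟩ (by omega)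
      rw [this]; ring
  rw [hodd, add_zero, sum_range_succ] at h
  rw [Finset.range_eq_Ico, Finset.sum_eq_sum_Ico_succ_bot (by omega : 0 < n)] at h
  have hB1 : bernoulli (2 * n - 1) = 0 := bern_odd ⟨n - 1, by omega⟩ (by omega)
  simp only [Nat.mul_zero, Nat.choose_zero_right, bernoulli_zero, Nat.sub_zero, Nat.cast_one,
    one_mul, Nat.sub_self, Nat.choose_self, mul_one, hB1, mul_zero] at h
  push_cast at h ⊢
  linarith [h]
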